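/- For every a ≥ 1 and b, the sequence λ(a·n + b) changes sign infinitely often in n; that is, there are infinitely many n with λ(a·n+b) = 1 and infinitely many n with λ(a·n+b) = -1. -/

import Mathlib

/-- The Liouville function `λ(n) = (-1)^Ω(n)`. -/
def liouville (n : ℕ) : ℤ := (-1) ^ (ArithmeticFunction.cardFactors n)

lemma liouville_aux (a b : ℕ) (ha : 0 < a) (hb : 0 < b) (c : ℕ) :
    {n : ℕ | liouville (a * n + b) =
      (-1) ^ (ArithmeticFunction.cardFactors b + c)}.Infinite := by
  obtain ⟨p, hp, hpgt, hmod⟩ := Nat.exists_prime_gt_modEq_one (k := a) 1 ha.ne'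
  have hp2 : 2 ≤ p := hpgt
  -- for each k, there is n with a * n + b = b * p ^ (2*k + c)
  have hex : ∀ k : ℕ, ∃ n : ℕ, a * n + b = b * p ^ (2 * k + c) := by
    intro k
    have hpow : p ^ (2 * k + c) ≡ 1 [MOD a] := by
      simpa using hmod.pow (2 * k + c)
    have hcong : b * p ^ (2 * k + c) ≡ b [MOD a] := by
      simpa using (Nat.ModEq.refl b).mul hpow
    have hle : b ≤ b * p ^ (2 * k + c) :=
      Nat.le_mul_of_pos_right b (pow_pos (Nat.lt_of_lt_of_le Nat.zero_lt_one hpgt.le) _)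
    have hdvd : a ∣ b * p ^ (2 * k + c) - b := (Nat.modEq_iff_dvd' hle).mp hcong.symm
    obtain ⟨n, hn⟩ := hdvd
    exact ⟨n, by omega⟩
  choose f hf using hex
  apply Set.infinite_of_injective_forall_mem (f := f)
  · intro k₁ k₂ hk
    have h : b * p ^ (2 * k₁ + c) = b * p ^ (2 * k₂ + c) := by
      rw [← hf k₁, ← hf k₂, hk]
    have h2 : p ^ (2 * k₁ + c) = p ^ (2 * k₂ + c) :=
      Nat.eq_of_mul_eq_mul_left hb h
    have := Nat.pow_right_injective hp2 h2
    omega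
  · intro k
    show liouville (a * f k + b) = _
    rw [hf k]
    unfold liouville
    have hΩ : ArithmeticFunction.cardFactors (b * p ^ (2 * k + c)) =
        ArithmeticFunction.cardFactors b + (2 * k + c) := by
      rw [ArithmeticFunction.cardFactors_mul hb.ne' (pow_pos (Nat.lt_of_lt_of_le Nat.zero_lt_one hpgt.le) _).ne',
        ArithmeticFunction.cardFactors_apply_prime_pow hp]
    rw [hΩ]
    have : ((-1 : ℤ)) ^ (ArithmeticFunction.cardFactors b + (2 * k + c)) =
        (-1) ^ (ArithmeticFunction.cardFactors b + c) * ((-1) ^ 2) ^ k := by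
      rw [← pow_mul, ← pow_add]; ring_nf
    rw [this]; simp

/-- For positive integers `a, b`, the sequence `λ(a·n + b)` changes sign infinitely often. -/
theorem liouville_linear_changes_sign (a b : ℕ) (ha : 0 < a) (hb : 0 < b) :
    {n : ℕ | liouville (a * n + b) = 1}.Infinite ∧
      {n : ℕ | liouville (a * n + b) = -1}.Infinite := by
  set Ω := ArithmeticFunction.cardFactors b with hΩ
  rcases Nat.even_or_odd Ω with he | ho
  · constructor
    · have := liouville_aux a b ha hb 0
      simpa [Even.neg_one_pow (by simpa using he), ← hΩ] using this
    · have := liouville_aux a b ha hb 1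
      have hodd : Odd (Ω + 1) := Even.add_one he
      simpa [Odd.neg_one_pow hodd, ← hΩ] using this
  · constructor
    · have := liouville_aux a b ha hb 1
      have heven : Even (Ω + 1) := Odd.add_one ho
      simpa [Even.neg_one_pow heven, ← hΩ] using this
    · have := liouville_aux a b ha hb 0
      simpa [Odd.neg_one_pow (by simpa using ho), ← hΩ] using this
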